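/- Under the standing construction, assume additionally that X is a real Hilbert space, {v_n}_{n≥1} is orthonormal, and t₁ + t₂ > 1. For n ≥ 2 let τ_n ∈ [(t_{n−1}+t_n)/2, t_n) be a point at which z_n′ attains its maximum (so z_n′(τ_n) > 0), and let w(t) := Σ_{n=1}^∞ χ_{[t_n,1)}(t) · (1/Γ(1−α)) (∫_0^t (t−s)^{−α} z_{n+1}′(s) ds) v_{n+1}. Then the sequence {‖w(τ_n)‖}_{n≥2} is unbounded; equivalently, there exists a subsequence {τ_{n_l}} with lim_{l→∞} ‖w(τ_{n_l})‖ = ∞. -/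

import Mathlib

open Set Filter MeasureTheory

/-- In a Hilbert space, with `{v_n}` orthonormal and `t₁ + t₂ > 1`, the values of the
Caputo derivative `w` at the maximum points `τ_n` of `z_n′` form an unbounded sequence;
equivalently there is a subsequence along which `‖w(τ_{n_l})‖ → ∞` (property (P)). -/
theorem property_P_holds_in_Hilbert_spaces
    (α : ℝ) (hα : α ∈ Set.Ioo (0 : ℝ) 1)
    (X : Type*) [NormedAddCommGroup X] [InnerProductSpace ℝ X] [CompleteSpace X]
    (t : ℕ → ℝ) (z : ℕ → ℝ → ℝ) (v : ℕ → X) (τ : ℕ → ℝ)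
    (ht_mem : ∀ n, 1 ≤ n → t n ∈ Set.Ioo (0 : ℝ) 1)
    (ht_mono : ∀ n, 1 ≤ n → t n < t (n + 1))
    (ht_lim : Filter.Tendsto t Filter.atTop (nhds 1))
    (ht_step : ∀ n, 2 ≤ n → t (n + 1) - t n < t n - t (n - 1))
    (ht_sum : 1 < t 1 + t 2)
    (hz1 : ∀ s : ℝ, z 1 s = 1)
    (hz_smooth : ∀ n, 2 ≤ n → ContDiff ℝ 1 (z n))
    (hz_one : ∀ n, 2 ≤ n → ∀ s ∈ Set.Icc (t n) (t (n + 1)), z n s = 1)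
    (hz_mid : ∀ n, 2 ≤ n → ∀ s ∈ Set.Ioo ((t (n - 1) + t n) / 2) (t n) ∪
        Set.Ioo (t (n + 1)) ((t (n + 1) + t (n + 2)) / 2),
      0 < z n s ∧ z n s < 1)
    (hz_zero : ∀ n, 2 ≤ n → ∀ s : ℝ,
      s ∉ Set.Ioo ((t (n - 1) + t n) / 2) ((t (n + 1) + t (n + 2)) / 2) → z n s = 0)
    (hz_deriv_nonneg : ∀ n, 2 ≤ n →
      ∀ s ∈ Set.Icc ((t (n - 1) + t n) / 2) (t n), 0 ≤ deriv (z n) s)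
    (hz_deriv_nonpos : ∀ n, 2 ≤ n →
      ∀ s ∈ Set.Icc (t (n + 1)) ((t (n + 1) + t (n + 2)) / 2), deriv (z n) s ≤ 0)
    -- {v_n}_{n ≥ 1} is orthonormal
    (hv_orth : ∀ n m, 1 ≤ n → 1 ≤ m →
      (inner ℝ (v n) (v m) : ℝ) = if n = m then 1 else 0)
    -- τ_n is a maximum point of z_n′ in [(t_{n-1}+t_n)/2, t_n), and z_n′(τ_n) > 0
    (hτ_mem : ∀ n, 2 ≤ n → τ n ∈ Set.Ico ((t (n - 1) + t n) / 2) (t n))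
    (hτ_max : ∀ n, 2 ≤ n → ∀ s : ℝ, deriv (z n) s ≤ deriv (z n) (τ n))
    (hτ_pos : ∀ n, 2 ≤ n → 0 < deriv (z n) (τ n)) :
    ∀ w : ℝ → X,
      (∀ s : ℝ, w s = ∑' n : ℕ,
        Set.indicator (Set.Ico (t (n + 1)) 1)
          (fun r : ℝ => (1 / Real.Gamma (1 - α)) *
            ∫ σ in (0 : ℝ)..r, ((r - σ) ^ (-α)) * deriv (z (n + 2)) σ) s • v (n + 2)) →
      -- the sequence {‖w(τ_n)‖}_{n ≥ 2} is unbounded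
      (¬ ∃ M : ℝ, ∀ n, 2 ≤ n → ‖w (τ n)‖ ≤ M) ∧
      -- equivalently, there is a subsequence with ‖w(τ_{n_l})‖ → ∞
      (∃ φ : ℕ → ℕ, StrictMono φ ∧ (∀ l, 2 ≤ φ l) ∧
        Filter.Tendsto (fun l => ‖w (τ (φ l))‖) Filter.atTop Filter.atTop) := by
  intro w hw
  obtain ⟨hα0, hα1⟩ := hα
  have hΓ : 0 < Real.Gamma (1 - α) := Real.Gamma_pos_of_pos (by linarith)
  have ht_le : ∀ a b : ℕ, 1 ≤ a → a ≤ b → t a ≤ t b := by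
    intro a b ha hab
    obtain ⟨k, rfl⟩ := Nat.exists_eq_add_of_le hab
    clear hab
    induction k with
    | zero => simp
    | succ k ih => exact le_trans ih (le_of_lt (ht_mono (a + k) (by omega)))
  have hz_bounds : ∀ q : ℕ, ∀ s : ℝ, 0 ≤ z (q + 2) s ∧ z (q + 2) s ≤ 1 := by
    intro q s
    have hmid := hz_mid (q + 2) (by omega) s
    have hzero := hz_zero (q + 2) (by omega) s
    have hone := hz_one (q + 2) (by omega) s
    simp only [show q + 2 - 1 = q + 1 from by omega, show q + 2 + 1 = q + 3 from by omega,
      show q + 2 + 2 = q + 4 from by omega] at hmid hzero hone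
    by_cases hin : s ∈ Set.Ioo ((t (q + 1) + t (q + 2)) / 2) ((t (q + 3) + t (q + 4)) / 2)
    · rcases lt_or_ge s (t (q + 2)) with h1 | h1
      · have h := hmid (Or.inl ⟨hin.1, h1⟩); exact ⟨h.1.le, h.2.le⟩
      · rcases le_or_gt s (t (q + 3)) with h2 | h2
        · rw [hone ⟨h1, h2⟩]; norm_num
        · have h := hmid (Or.inr ⟨h2, hin.2⟩); exact ⟨h.1.le, h.2.le⟩
    · rw [hzero hin]; norm_num
  -- key estimate
  have key : ∀ p : ℕ,
      (1 / Real.Gamma (1 - α)) * (t (p + 3) - t (p + 1)) ^ (-α) ≤ ‖w (τ (p + 3))‖ := by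
    intro p
    have ht1 : t (p + 1) < t (p + 2) := ht_mono (p + 1) (by omega)
    have ht2 : t (p + 2) < t (p + 3) := ht_mono (p + 2) (by omega)
    have ht0 : 0 < t (p + 1) := (ht_mem (p + 1) (by omega)).1
    have htl : t (p + 3) < 1 := (ht_mem (p + 3) (by omega)).2
    have hτmem := hτ_mem (p + 3) (by omega)
    simp only [show p + 3 - 1 = p + 2 from by omega] at hτmem
    set τp := τ (p + 3) with hτp
    have hτlt : τp < t (p + 3) := hτmem.2
    have hτgt : t (p + 2) < τp := by
      have h := hτmem.1; linarith
    set m := (t (p + 1) + t (p + 2)) / 2 with hm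
    set b := t (p + 2) with hb
    have hm0 : 0 < m := by rw [hm]; linarith
    have hmb : m < b := by rw [hm, hb]; linarith
    have hbτ : b < τp := hτgt
    have hsm := hz_smooth (p + 2) (by omega)
    have hdiff : Differentiable ℝ (z (p + 2)) := hsm.differentiable one_ne_zero
    have hc : Continuous (deriv (z (p + 2))) := hsm.continuous_deriv le_rfl
    have hzero : ∀ s : ℝ, s ∉ Set.Ioo m ((t (p + 3) + t (p + 4)) / 2) → z (p + 2) s = 0 := by
      intro s hs
      have h := hz_zero (p + 2) (by omega) s
      simp only [show p + 2 - 1 = p + 1 from by omega, show p + 2 + 1 = p + 3 from by omega,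
        show p + 2 + 2 = p + 4 from by omega] at h
      exact h hs
    have hone : ∀ s ∈ Set.Icc b (t (p + 3)), z (p + 2) s = 1 := by
      intro s hs
      have h := hz_one (p + 2) (by omega) s
      simp only [show p + 2 + 1 = p + 3 from by omega] at h
      exact h hs
    have hzm : z (p + 2) m = 0 := hzero m (by intro h; exact lt_irrefl m h.1)
    have hzb : z (p + 2) b = 1 := hone b ⟨le_rfl, ht2.le⟩
    have hdm : deriv (z (p + 2)) m = 0 := by
      have hmin : IsLocalMin (z (p + 2)) m := by
        unfold IsLocalMin IsMinFilter
        exact Filter.Eventually.of_forall fun x => by rw [hzm]; exact (hz_bounds p x).1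
      exact hmin.deriv_eq_zero
    have hdb : deriv (z (p + 2)) b = 0 := by
      have hmax : IsLocalMax (z (p + 2)) b := by
        unfold IsLocalMax IsMaxFilter
        exact Filter.Eventually.of_forall fun x => by rw [hzb]; exact (hz_bounds p x).2
      exact hmax.deriv_eq_zero
    have hd0 : ∀ σ : ℝ, σ < m → deriv (z (p + 2)) σ = 0 := by
      intro σ hσ
      have hev : z (p + 2) =ᶠ[nhds σ] fun _ => 0 := by
        filter_upwards [Iio_mem_nhds hσ] with x hx
        exact hzero x fun hmem => absurd (hx.trans hmem.1) (lt_irrefl x)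
      rw [hev.deriv_eq]; exact deriv_const σ 0
    have hd1 : ∀ σ : ℝ, b < σ → σ < t (p + 3) → deriv (z (p + 2)) σ = 0 := by
      intro σ h1 h2
      have hev : z (p + 2) =ᶠ[nhds σ] fun _ => 1 := by
        filter_upwards [Ioo_mem_nhds h1 h2] with x hx
        exact hone x ⟨hx.1.le, hx.2.le⟩
      rw [hev.deriv_eq]; exact deriv_const σ 1
    set f : ℝ → ℝ := fun σ => (τp - σ) ^ (-α) * deriv (z (p + 2)) σ with hfdef
    have hf0a : ∀ σ ∈ Set.Icc (0 : ℝ) m, f σ = 0 := by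
      intro σ hσ
      have hdz : deriv (z (p + 2)) σ = 0 := by
        rcases lt_or_eq_of_le hσ.2 with h | h
        · exact hd0 σ h
        · rw [h]; exact hdm
      simp [hfdef, hdz]
    have hf0b : ∀ σ ∈ Set.Icc b τp, f σ = 0 := by
      intro σ hσ
      have hdz : deriv (z (p + 2)) σ = 0 := by
        rcases eq_or_lt_of_le hσ.1 with h | h
        · rw [← h]; exact hdb
        · exact hd1 σ h (lt_of_le_of_lt hσ.2 hτlt)
      simp [hfdef, hdz]
    have hfc : ContinuousOn f (Set.Icc 0 b) := by
      rw [hfdef]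
      apply ContinuousOn.mul
      · apply ContinuousOn.rpow_const
        · exact (continuous_const.sub continuous_id).continuousOn
        · intro x hx
          exact Or.inl (ne_of_gt (by have := hx.2; linarith))
      · exact hc.continuousOn
    have ii1 : IntervalIntegrable f volume 0 m := by
      apply ContinuousOn.intervalIntegrable
      rw [Set.uIcc_of_le hm0.le]
      exact hfc.mono (Set.Icc_subset_Icc le_rfl hmb.le)
    have ii2 : IntervalIntegrable f volume m b := by
      apply ContinuousOn.intervalIntegrable
      rw [Set.uIcc_of_le hmb.le]
      exact hfc.mono (Set.Icc_subset_Icc hm0.le le_rfl)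
    have ii3 : IntervalIntegrable f volume b τp := by
      apply ContinuousOn.intervalIntegrable
      rw [Set.uIcc_of_le hbτ.le]
      exact continuousOn_const.congr fun σ hσ => hf0b σ hσ
    have hsplit : ∫ σ in (0 : ℝ)..τp, f σ =
        (∫ σ in (0 : ℝ)..m, f σ) + (∫ σ in m..b, f σ) + ∫ σ in b..τp, f σ := by
      rw [intervalIntegral.integral_add_adjacent_intervals ii1 ii2,
        intervalIntegral.integral_add_adjacent_intervals (ii1.trans ii2) ii3]
    have hz1int : ∫ σ in (0 : ℝ)..m, f σ = 0 := by
      have h := intervalIntegral.integral_congr (μ := volume) (a := (0 : ℝ)) (b := m)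
        (f := f) (g := fun _ => (0 : ℝ))
        (by rw [Set.uIcc_of_le hm0.le]; exact fun σ hσ => hf0a σ hσ)
      simpa using h
    have hz3int : ∫ σ in b..τp, f σ = 0 := by
      have h := intervalIntegral.integral_congr (μ := volume) (a := b) (b := τp)
        (f := f) (g := fun _ => (0 : ℝ))
        (by rw [Set.uIcc_of_le hbτ.le]; exact fun σ hσ => hf0b σ hσ)
      simpa using h
    have hftc : ∫ σ in m..b, deriv (z (p + 2)) σ = 1 := by
      rw [intervalIntegral.integral_deriv_eq_sub (fun x _ => hdiff.differentiableAt)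
        (hc.intervalIntegrable m b), hzb, hzm, sub_zero]
    have hptw : ∀ x ∈ Set.Icc m b, (τp - m) ^ (-α) * deriv (z (p + 2)) x ≤ f x := by
      intro x hx
      have hd : 0 ≤ deriv (z (p + 2)) x := by
        have h := hz_deriv_nonneg (p + 2) (by omega) x
        simp only [show p + 2 - 1 = p + 1 from by omega] at h
        exact h ⟨hx.1, hx.2⟩
      have hk : (τp - m) ^ (-α) ≤ (τp - x) ^ (-α) :=
        Real.rpow_le_rpow_of_nonpos (by have := hx.2; linarith) (by have := hx.1; linarith)
          (by linarith)
      have h := mul_le_mul_of_nonneg_right hk hd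
      simpa [hfdef] using h
    have hmono : (τp - m) ^ (-α) ≤ ∫ σ in m..b, f σ := by
      have h1 : ∫ σ in m..b, (τp - m) ^ (-α) * deriv (z (p + 2)) σ ≤ ∫ σ in m..b, f σ :=
        intervalIntegral.integral_mono_on hmb.le
          ((continuous_const.mul hc).intervalIntegrable m b) ii2 hptw
      rwa [intervalIntegral.integral_const_mul, hftc, mul_one] at h1
    have hJ : (τp - m) ^ (-α) ≤ ∫ σ in (0 : ℝ)..τp, (τp - σ) ^ (-α) * deriv (z (p + 2)) σ := by
      have h : (τp - m) ^ (-α) ≤ ∫ σ in (0 : ℝ)..τp, f σ := by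
        rw [hsplit, hz1int, hz3int]
        simpa using hmono
      simpa [hfdef] using h
    have hmemIco : τp ∈ Set.Ico (t (p + 1)) 1 := ⟨by linarith, by linarith⟩
    have hW : w τp = ∑ k ∈ Finset.range (p + 2),
        (Set.indicator (Set.Ico (t (k + 1)) 1)
          (fun r : ℝ => (1 / Real.Gamma (1 - α)) *
            ∫ σ in (0 : ℝ)..r, ((r - σ) ^ (-α)) * deriv (z (k + 2)) σ) τp) • v (k + 2) := by
      rw [hw τp]
      apply tsum_eq_sum
      intro k hk
      have hk' : p + 2 ≤ k := by simpa [Finset.mem_range, not_lt] using hk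
      have hge : t (p + 3) ≤ t (k + 1) := ht_le (p + 3) (k + 1) (by omega) (by omega)
      have hnot : τp ∉ Set.Ico (t (k + 1)) 1 := by
        intro hmem
        have := hmem.1
        linarith
      rw [Set.indicator_of_notMem hnot, zero_smul]
    have hv1 : ‖v (p + 2)‖ = 1 := by
      have h := hv_orth (p + 2) (p + 2) (by omega) (by omega)
      rw [if_pos rfl, real_inner_self_eq_norm_mul_norm] at h
      nlinarith [norm_nonneg (v (p + 2))]
    have hinner : (inner ℝ (w τp) (v (p + 2)) : ℝ)
        = Set.indicator (Set.Ico (t (p + 1)) 1)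
          (fun r : ℝ => (1 / Real.Gamma (1 - α)) *
            ∫ σ in (0 : ℝ)..r, ((r - σ) ^ (-α)) * deriv (z (p + 2)) σ) τp := by
      rw [hW, sum_inner, Finset.sum_eq_single p]
      · rw [real_inner_smul_left, hv_orth (p + 2) (p + 2) (by omega) (by omega), if_pos rfl,
          mul_one]
      · intro k hkmem hkne
        rw [real_inner_smul_left, hv_orth (k + 2) (p + 2) (by omega) (by omega),
          if_neg (by omega), mul_zero]
      · intro h; exact absurd (Finset.mem_range.mpr (by omega)) h
    have hbound : (1 / Real.Gamma (1 - α)) * (τp - m) ^ (-α) ≤ ‖w τp‖ := by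
      have h1 : (inner ℝ (w τp) (v (p + 2)) : ℝ) ≤ ‖w τp‖ := by
        have h := real_inner_le_norm (w τp) (v (p + 2))
        rwa [hv1, mul_one] at h
      have h2 : (1 / Real.Gamma (1 - α)) * (τp - m) ^ (-α)
          ≤ (inner ℝ (w τp) (v (p + 2)) : ℝ) := by
        rw [hinner, Set.indicator_of_mem hmemIco]
        exact mul_le_mul_of_nonneg_left hJ (le_of_lt (by positivity))
      linarith
    have hr : (t (p + 3) - t (p + 1)) ^ (-α) ≤ (τp - m) ^ (-α) := by
      apply Real.rpow_le_rpow_of_nonpos (by linarith) (by rw [hm]; linarith) (by linarith)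
    calc (1 / Real.Gamma (1 - α)) * (t (p + 3) - t (p + 1)) ^ (-α)
        ≤ (1 / Real.Gamma (1 - α)) * (τp - m) ^ (-α) :=
          mul_le_mul_of_nonneg_left hr (le_of_lt (by positivity))
      _ ≤ ‖w τp‖ := hbound
  -- the lower bound tends to infinity
  have hGtend : Tendsto (fun p : ℕ => (1 / Real.Gamma (1 - α)) * (t (p + 3) - t (p + 1)) ^ (-α))
      atTop atTop := by
    have hdiff0 : Tendsto (fun p : ℕ => t (p + 3) - t (p + 1)) atTop (nhds 0) := by
      have h3 : Tendsto (fun p : ℕ => t (p + 3)) atTop (nhds 1) :=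
        ht_lim.comp (tendsto_add_atTop_nat 3)
      have h1 : Tendsto (fun p : ℕ => t (p + 1)) atTop (nhds 1) :=
        ht_lim.comp (tendsto_add_atTop_nat 1)
      simpa using h3.sub h1
    have hdiffpos : ∀ p : ℕ, 0 < t (p + 3) - t (p + 1) := fun p => by
      have h1 := ht_mono (p + 1) (by omega)
      have h2 := ht_mono (p + 2) (by omega)
      linarith
    have hdiffW : Tendsto (fun p : ℕ => t (p + 3) - t (p + 1)) atTop
        (nhdsWithin 0 (Set.Ioi 0)) :=
      tendsto_nhdsWithin_of_tendsto_nhds_of_eventually_within _ hdiff0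
        (Filter.Eventually.of_forall fun p => hdiffpos p)
    have hrpow : Tendsto (fun x : ℝ => x ^ (-α)) (nhdsWithin 0 (Set.Ioi 0)) atTop := by
      have hxα : Tendsto (fun x : ℝ => x ^ α) (nhdsWithin 0 (Set.Ioi 0))
          (nhdsWithin 0 (Set.Ioi 0)) := by
        apply tendsto_nhdsWithin_of_tendsto_nhds_of_eventually_within
        · have hcont : Tendsto (fun x : ℝ => x ^ α) (nhds 0) (nhds 0) := by
            have h := Real.continuousAt_rpow_const 0 α (Or.inr hα0.le)
            simpa [ContinuousAt, Real.zero_rpow (ne_of_gt hα0)] using h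
          exact hcont.mono_left nhdsWithin_le_nhds
        · filter_upwards [self_mem_nhdsWithin] with x hx
          exact Real.rpow_pos_of_pos hx α
      have h := tendsto_inv_nhdsGT_zero.comp hxα
      apply Filter.Tendsto.congr' _ h
      filter_upwards [self_mem_nhdsWithin] with x hx
      simp only [Function.comp]
      exact (Real.rpow_neg (le_of_lt hx) α).symm
    have h := hrpow.comp hdiffW
    exact Filter.Tendsto.const_mul_atTop (by positivity) h
  constructor
  · rintro ⟨M, hM⟩
    obtain ⟨p, hp⟩ := (hGtend.eventually_gt_atTop M).exists
    exact absurd ((key p).trans (hM (p + 3) (by omega))) (not_le.mpr hp)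
  · refine ⟨fun l => l + 3, fun a b h => by dsimp only; omega, fun l => by dsimp only; omega, ?_⟩
    exact tendsto_atTop_mono key hGtend
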